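/- The intersection Γ_n(N) ∩ K of the principal congruence subgroup with the maximal compact subgroup K = Sp(2n,ℝ) ∩ U(2n) equals: {k_u : u ∈ Diag_n({±1, ±i}) · S_n} if N = 1; {k_u : u ∈ Diag_n({±1})} if N = 2; and {I_{2n}} if N ≥ 3. Here S_n denotes the group of n×n permutation matrices. -/

import Mathlib

open scoped BigOperators
open Matrix Complex

noncomputable section

abbrev Mat (n : ℕ) := Matrix (Fin n) (Fin n) ℂ
abbrev MatR (n : ℕ) := Matrix (Fin n) (Fin n) ℝ
abbrev GMat (n : ℕ) := Matrix (Fin n ⊕ Fin n) (Fin n ⊕ Fin n) ℝ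
abbrev GMatC (n : ℕ) := Matrix (Fin n ⊕ Fin n) (Fin n ⊕ Fin n) ℂ

def Jmat (n : ℕ) : GMat n := Matrix.fromBlocks 0 1 (-1) 0

def Sp (n : ℕ) : Set (GMat n) := {g | gᵀ * Jmat n * g = Jmat n}

def imPart {n : ℕ} (z : Mat n) : MatR n := Matrix.of fun i j => (z i j).im
def rePart {n : ℕ} (z : Mat n) : MatR n := Matrix.of fun i j => (z i j).re

def SiegelH (n : ℕ) : Set (Mat n) := {z | zᵀ = z ∧ (imPart z).PosDef}

def mapC {n : ℕ} (g : GMat n) : GMatC n := g.map Complex.ofReal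

def denC {n : ℕ} (g : GMatC n) (z : Mat n) : Mat n := g.toBlocks₂₁ * z + g.toBlocks₂₂
def numC {n : ℕ} (g : GMatC n) (z : Mat n) : Mat n := g.toBlocks₁₁ * z + g.toBlocks₁₂
def actC {n : ℕ} (g : GMatC n) (z : Mat n) : Mat n := numC g z * (denC g z)⁻¹
def jC {n : ℕ} (g : GMatC n) (z : Mat n) : ℂ := (denC g z).det

def act {n : ℕ} (g : GMat n) (z : Mat n) : Mat n := actC (mapC g) z
def jfac {n : ℕ} (g : GMat n) (z : Mat n) : ℂ := jC (mapC g) z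

def slash {n : ℕ} (m : ℤ) (f : Mat n → ℂ) (g : GMat n) (z : Mat n) : ℂ :=
  (jfac g z) ^ (-m) * f (act g z)

def lift {n : ℕ} (m : ℤ) (f : Mat n → ℂ) (g : GMat n) : ℂ :=
  slash m f g (Complex.I • 1)

def GammaN (n N : ℕ) : Set (GMat n) :=
  {g | g ∈ Sp n ∧ ∀ i j, ∃ k : ℤ, g i j = (1 : GMat n) i j + (N : ℝ) * k}

def Kset (n : ℕ) : Set (GMat n) := {g | g ∈ Sp n ∧ gᵀ * g = 1}

def kmat {n : ℕ} (u : Mat n) : GMat n :=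
  Matrix.fromBlocks (rePart u) (imPart u) (-(imPart u)) (rePart u)


-- Signed permutation lemma
lemma signed_perm {n : ℕ} {g : GMat n}
    (hint : ∀ i j, ∃ k : ℤ, g i j = (k : ℝ)) (horth : gᵀ * g = 1) :
    ∃ (π : Equiv.Perm (Fin n ⊕ Fin n)) (ε : (Fin n ⊕ Fin n) → ℝ),
      (∀ j, ε j = 1 ∨ ε j = -1) ∧ ∀ i j, g i j = if i = π j then ε j else 0 := by
  classical
  choose G hG using hint
  -- column relations over ℤ
  have hcol : ∀ j j', (∑ i, G i j * G i j' : ℝ) = if j = j' then 1 else 0 := by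
    intro j j'
    have := congrFun (congrFun horth j) j'
    simp only [Matrix.mul_apply, Matrix.transpose_apply, Matrix.one_apply] at this
    push_cast [← hG] at this ⊢
    simpa using this
  have hcolZ : ∀ j j', (∑ i, G i j * G i j') = if j = j' then (1:ℤ) else 0 := by
    intro j j'
    have := hcol j j'
    exact_mod_cast (by push_cast; simpa using this : ((∑ i, G i j * G i j' : ℤ) : ℝ) = ((if j = j' then (1:ℤ) else 0 : ℤ) : ℝ))
  -- each column has a unique nonzero entry
  have huniq : ∀ j, ∃! i, G i j ≠ 0 := by
    intro j
    have hs : (∑ i, G i j * G i j) = 1 := by simpa using hcolZ j j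
    have hex : ∃ i, G i j ≠ 0 := by
      by_contra h
      push_neg at h
      simp [h] at hs
    obtain ⟨i0, hi0⟩ := hex
    refine ⟨i0, hi0, ?_⟩
    intro i1 hi1
    by_contra hne
    have h2 : (2:ℤ) ≤ ∑ i, G i j * G i j := by
      have : ∑ i ∈ ({i0, i1} : Finset _), G i j * G i j ≤ ∑ i, G i j * G i j := by
        apply Finset.sum_le_sum_of_subset_of_nonneg (Finset.subset_univ _)
        intro i _ _; exact mul_self_nonneg _
      have h0 : 1 ≤ G i0 j * G i0 j := by
        rcases lt_or_gt_of_ne hi0 with h | h <;> nlinarith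
      have h1 : 1 ≤ G i1 j * G i1 j := by
        rcases lt_or_gt_of_ne hi1 with h | h <;> nlinarith
      rw [Finset.sum_insert (by simp [Ne.symm hne]), Finset.sum_singleton] at this
      linarith
    omega
  choose π0 hπ0 hπu using huniq
  have hzero : ∀ i j, i ≠ π0 j → G i j = 0 := by
    intro i j h
    by_contra hne
    exact h (hπu j i hne)
  have hinj : Function.Injective π0 := by
    intro j j' he
    by_contra hne
    have hs := hcolZ j j'
    rw [if_neg hne] at hs
    rw [Finset.sum_eq_single (π0 j)] at hs
    · exact mul_ne_zero (hπ0 j) (he ▸ hπ0 j') hs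
    · intro i _ hi
      rw [hzero i j hi, zero_mul]
    · simp
  have hbij : Function.Bijective π0 := Finite.injective_iff_bijective.mp hinj
  refine ⟨Equiv.ofBijective π0 hbij, fun j => g (π0 j) j, ?_, ?_⟩
  · intro j
    have hs : (∑ i, G i j * G i j) = 1 := by simpa using hcolZ j j
    rw [Finset.sum_eq_single (π0 j)] at hs
    · have : IsUnit (G (π0 j) j) := IsUnit.of_mul_eq_one _ hs
      rcases Int.isUnit_iff.mp this with h | h <;> [left; right] <;>
        simp [hG, h]
    · intro i _ hi; rw [hzero i j hi, zero_mul]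
    · simp
  · intro i j
    rcases eq_or_ne i (π0 j) with h | h
    · simp [Equiv.ofBijective, h]
    · rw [if_neg (by simpa [Equiv.ofBijective] using h), hG, hzero i j h]
      simp
lemma Jmat_ll {n : ℕ} (a b : Fin n) : Jmat n (Sum.inl a) (Sum.inl b) = 0 := rfl
lemma Jmat_lr {n : ℕ} (a b : Fin n) : Jmat n (Sum.inl a) (Sum.inr b) = if a = b then 1 else 0 := by
  simp [Jmat, Matrix.fromBlocks, Matrix.one_apply]
lemma Jmat_rl {n : ℕ} (a b : Fin n) : Jmat n (Sum.inr a) (Sum.inl b) = -(if a = b then 1 else 0) := by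
  simp [Jmat, Matrix.fromBlocks, Matrix.one_apply]
lemma Jmat_rr {n : ℕ} (a b : Fin n) : Jmat n (Sum.inr a) (Sum.inr b) = 0 := rfl

lemma sp_rel {n : ℕ} {g : GMat n} {π : Equiv.Perm (Fin n ⊕ Fin n)} {ε : (Fin n ⊕ Fin n) → ℝ}
    (hg : ∀ i j, g i j = if i = π j then ε j else 0) (hsp : g ∈ Sp n) :
    ∀ i j, ε i * ε j * Jmat n (π i) (π j) = Jmat n i j := by
  intro i j
  have := congrFun (congrFun hsp i) j
  rw [Matrix.mul_apply] at this
  rw [Finset.sum_eq_single (π j)] at this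
  · rw [Matrix.mul_apply, Finset.sum_eq_single (π i)] at this
    · rw [Matrix.transpose_apply, hg, if_pos rfl, hg, if_pos rfl] at this
      rw [← this]; ring
    · intro c _ hc
      rw [Matrix.transpose_apply, hg, if_neg hc, zero_mul]
    · simp
  · intro b _ hb
    rw [hg, if_neg hb, mul_zero]
  · simp
lemma pairing {n : ℕ} {π : Equiv.Perm (Fin n ⊕ Fin n)} {ε : (Fin n ⊕ Fin n) → ℝ}
    (hε : ∀ j, ε j = 1 ∨ ε j = -1)
    (hrel : ∀ i j, ε i * ε j * Jmat n (π i) (π j) = Jmat n i j) (a : Fin n) :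
    (∃ b, π (Sum.inl a) = Sum.inl b ∧ π (Sum.inr a) = Sum.inr b ∧ ε (Sum.inl a) = ε (Sum.inr a)) ∨
    (∃ b, π (Sum.inl a) = Sum.inr b ∧ π (Sum.inr a) = Sum.inl b ∧ ε (Sum.inl a) = -ε (Sum.inr a)) := by
  have h := hrel (Sum.inl a) (Sum.inr a)
  rw [Jmat_lr, if_pos rfl] at h
  rcases hb : π (Sum.inl a) with b | b <;> rw [hb] at h <;>
    rcases hc : π (Sum.inr a) with c | c <;> rw [hc] at h
  · rw [Jmat_ll] at h; simp at h
  · rw [Jmat_lr] at h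
    rcases eq_or_ne b c with he | he
    · subst he
      left
      refine ⟨b, rfl, rfl, ?_⟩
      rw [if_pos rfl, mul_one] at h
      rcases hε (Sum.inl a) with h1 | h1 <;> rcases hε (Sum.inr a) with h2 | h2 <;>
        rw [h1, h2] at h <;> rw [h1, h2] <;> norm_num at *
    · rw [if_neg he] at h; simp at h
  · rw [Jmat_rl] at h
    rcases eq_or_ne b c with he | he
    · subst he
      right
      refine ⟨b, rfl, rfl, ?_⟩
      rw [if_pos rfl] at h
      rcases hε (Sum.inl a) with h1 | h1 <;> rcases hε (Sum.inr a) with h2 | h2 <;>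
        rw [h1, h2] at h <;> rw [h1, h2] <;> norm_num at *
    · rw [if_neg he] at h; simp at h
  · rw [Jmat_rr] at h; simp at h
lemma kmat_mem {n : ℕ} {u : Mat n}
    (h1 : (rePart u)ᵀ * rePart u + (imPart u)ᵀ * imPart u = 1)
    (h2 : (rePart u)ᵀ * imPart u = (imPart u)ᵀ * rePart u) :
    kmat u ∈ Sp n ∧ (kmat u)ᵀ * kmat u = 1 := by
  have e0 : (imPart u)ᵀ * rePart u + -((rePart u)ᵀ * imPart u) = 0 := by rw [h2]; simp
  have e0' : -((rePart u)ᵀ * imPart u) + (imPart u)ᵀ * rePart u = 0 := by rw [h2]; simp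
  have e0'' : (rePart u)ᵀ * imPart u + -((imPart u)ᵀ * rePart u) = 0 := by rw [h2]; simp
  have e1 : (imPart u)ᵀ * imPart u + (rePart u)ᵀ * rePart u = 1 := by rw [add_comm]; exact h1
  have em : -((rePart u)ᵀ * rePart u) + -((imPart u)ᵀ * imPart u) = -1 := by
    rw [← neg_add, h1]
  constructor
  · show (kmat u)ᵀ * Jmat n * kmat u = Jmat n
    simp only [kmat, Jmat, Matrix.fromBlocks_transpose, Matrix.transpose_neg,
      Matrix.fromBlocks_multiply, Matrix.neg_mul, Matrix.mul_neg, neg_neg,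
      Matrix.zero_mul, Matrix.mul_zero, Matrix.mul_one, Matrix.one_mul,
      zero_add, add_zero]
    rw [e0, e0', e1, em]
  · show (kmat u)ᵀ * kmat u = 1
    simp only [kmat, Matrix.fromBlocks_transpose, Matrix.transpose_neg,
      Matrix.fromBlocks_multiply, Matrix.neg_mul, Matrix.mul_neg, neg_neg]
    rw [h1, e1, e0, e0'']
    exact Matrix.fromBlocks_one
lemma sumcol {n : ℕ} (σ : Equiv.Perm (Fin n)) (f g : Fin n → ℝ) (a b : Fin n) :
    (∑ i, (if i = σ a then f i else 0) * (if i = σ b then g i else 0))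
      = if a = b then f (σ a) * g (σ a) else 0 := by
  rw [Finset.sum_eq_single (σ a)]
  · rcases eq_or_ne a b with h | h
    · subst h; simp
    · rw [if_pos rfl, if_neg (fun hc => h (σ.injective hc)), if_neg h, mul_zero]
  · intro i _ hi
    rw [if_neg hi, zero_mul]
  · simp

lemma perm_u_entry {n : ℕ} (d : Fin n → ℂ) (σ : Equiv.Perm (Fin n)) (i j : Fin n) :
    (Matrix.diagonal d * (Matrix.of fun i j => if i = σ j then (1:ℂ) else 0)) i j
      = if i = σ j then d i else 0 := by
  rw [Matrix.diagonal_mul]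
  simp only [Matrix.of_apply]
  split_ifs <;> simp

lemma perm_u_mem {n : ℕ} (d : Fin n → ℂ) (σ : Equiv.Perm (Fin n))
    (hd : ∀ i, (d i).re * (d i).re + (d i).im * (d i).im = 1) :
    kmat (Matrix.diagonal d * (Matrix.of fun i j => if i = σ j then (1:ℂ) else 0)) ∈ Sp n ∧
    (kmat (Matrix.diagonal d * (Matrix.of fun i j => if i = σ j then (1:ℂ) else 0)))ᵀ
      * kmat (Matrix.diagonal d * (Matrix.of fun i j => if i = σ j then (1:ℂ) else 0)) = 1 := by
  set u := Matrix.diagonal d * (Matrix.of fun i j => if i = σ j then (1:ℂ) else 0) with hu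
  have hA : ∀ i j, rePart u i j = if i = σ j then (d i).re else 0 := by
    intro i j
    rw [rePart, Matrix.of_apply, hu, perm_u_entry]
    split_ifs <;> simp
  have hB : ∀ i j, imPart u i j = if i = σ j then (d i).im else 0 := by
    intro i j
    rw [imPart, Matrix.of_apply, hu, perm_u_entry]
    split_ifs <;> simp
  apply kmat_mem
  · ext a b
    rw [Matrix.add_apply, Matrix.mul_apply, Matrix.mul_apply, ← Finset.sum_add_distrib]
    have : ∀ i, (rePart u)ᵀ a i * rePart u i b + (imPart u)ᵀ a i * imPart u i b
        = (if i = σ a then (d i).re else 0) * (if i = σ b then (d i).re else 0)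
          + (if i = σ a then (d i).im else 0) * (if i = σ b then (d i).im else 0) := by
      intro i
      rw [Matrix.transpose_apply, Matrix.transpose_apply, hA, hA, hB, hB]
    rw [Finset.sum_congr rfl fun i _ => this i, Finset.sum_add_distrib,
      sumcol σ _ _ a b, sumcol σ _ _ a b, Matrix.one_apply]
    split_ifs with h
    · exact hd (σ a)
    · simp
  · ext a b
    rw [Matrix.mul_apply, Matrix.mul_apply]
    have l : ∀ i, (rePart u)ᵀ a i * imPart u i b
        = (if i = σ a then (d i).re else 0) * (if i = σ b then (d i).im else 0) := by
      intro i; rw [Matrix.transpose_apply, hA, hB]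
    have r : ∀ i, (imPart u)ᵀ a i * rePart u i b
        = (if i = σ a then (d i).im else 0) * (if i = σ b then (d i).re else 0) := by
      intro i; rw [Matrix.transpose_apply, hA, hB]
    rw [Finset.sum_congr rfl fun i _ => l i, Finset.sum_congr rfl fun i _ => r i,
      sumcol σ _ _ a b, sumcol σ _ _ a b]
    split_ifs with h
    · ring
    · rfl
lemma rePart_perm_u {n : ℕ} (d : Fin n → ℂ) (σ : Equiv.Perm (Fin n)) (i j : Fin n) :
    rePart (Matrix.diagonal d * (Matrix.of fun i j => if i = σ j then (1:ℂ) else 0)) i j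
      = if i = σ j then (d i).re else 0 := by
  rw [rePart, Matrix.of_apply, perm_u_entry]
  split_ifs <;> simp

lemma imPart_perm_u {n : ℕ} (d : Fin n → ℂ) (σ : Equiv.Perm (Fin n)) (i j : Fin n) :
    imPart (Matrix.diagonal d * (Matrix.of fun i j => if i = σ j then (1:ℂ) else 0)) i j
      = if i = σ j then (d i).im else 0 := by
  rw [imPart, Matrix.of_apply, perm_u_entry]
  split_ifs <;> simp

lemma recon {n : ℕ} {g : GMat n} {π : Equiv.Perm (Fin n ⊕ Fin n)} {ε : (Fin n ⊕ Fin n) → ℝ}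
    (hε : ∀ j, ε j = 1 ∨ ε j = -1)
    (hg : ∀ i j, g i j = if i = π j then ε j else 0)
    (hrel : ∀ i j, ε i * ε j * Jmat n (π i) (π j) = Jmat n i j) :
    ∃ (d : Fin n → ℂ) (σ : Equiv.Perm (Fin n)),
      (∀ i, d i = 1 ∨ d i = -1 ∨ d i = Complex.I ∨ d i = -Complex.I) ∧
      g = kmat (Matrix.diagonal d * (Matrix.of fun i j => if i = σ j then (1 : ℂ) else 0)) := by
  classical
  set σ0 : Fin n → Fin n := fun a => Sum.elim id id (π (Sum.inl a)) with hσ0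
  have hσval : ∀ a, (π (Sum.inl a) = Sum.inl (σ0 a)) ∨ (π (Sum.inl a) = Sum.inr (σ0 a)) := by
    intro a
    rcases hb : π (Sum.inl a) with b | b
    · left; rw [hσ0]; simp [hb]
    · right; rw [hσ0]; simp [hb]
  -- key pairing facts
  have key : ∀ a, (π (Sum.inl a) = Sum.inl (σ0 a) ∧ π (Sum.inr a) = Sum.inr (σ0 a) ∧
        ε (Sum.inl a) = ε (Sum.inr a)) ∨
      (π (Sum.inl a) = Sum.inr (σ0 a) ∧ π (Sum.inr a) = Sum.inl (σ0 a) ∧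
        ε (Sum.inl a) = -ε (Sum.inr a)) := by
    intro a
    rcases pairing hε hrel a with ⟨b, h1, h2, h3⟩ | ⟨b, h1, h2, h3⟩
    · left
      have : σ0 a = b := by rw [hσ0]; simp [h1]
      rw [this]; exact ⟨h1, h2, h3⟩
    · right
      have : σ0 a = b := by rw [hσ0]; simp [h1]
      rw [this]; exact ⟨h1, h2, h3⟩
  have hinj : Function.Injective σ0 := by
    intro a a' he
    rcases key a with ⟨h1, h2, _⟩ | ⟨h1, h2, _⟩ <;> rcases key a' with ⟨h1', h2', _⟩ | ⟨h1', h2', _⟩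
    · have : π (Sum.inl a) = π (Sum.inl a') := by rw [h1, h1', he]
      simpa using π.injective this
    · have : π (Sum.inl a) = π (Sum.inr a') := by rw [h1, h2', he]
      simpa using π.injective this
    · have : π (Sum.inr a) = π (Sum.inl a') := by rw [h2, h1', he]
      simpa using π.injective this
    · have : π (Sum.inl a) = π (Sum.inl a') := by rw [h1, h1', he]
      simpa using π.injective this
  let τ : Equiv.Perm (Fin n) := Equiv.ofBijective σ0 (Finite.injective_iff_bijective.mp hinj)
  have hτ : ∀ a, τ a = σ0 a := fun a => rfl
  set d : Fin n → ℂ := fun i =>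
    Sum.elim (fun _ => ((ε (Sum.inl (τ.symm i)) : ℝ) : ℂ))
      (fun _ => -((ε (Sum.inl (τ.symm i)) : ℝ) : ℂ) * Complex.I) (π (Sum.inl (τ.symm i))) with hdd
  have hdval : ∀ a, (π (Sum.inl a) = Sum.inl (σ0 a) → d (τ a) = ((ε (Sum.inl a) : ℝ) : ℂ)) ∧
      (π (Sum.inl a) = Sum.inr (σ0 a) → d (τ a) = -((ε (Sum.inl a) : ℝ) : ℂ) * Complex.I) := by
    intro a
    have hs : τ.symm (τ a) = a := Equiv.symm_apply_apply τ a
    constructor <;> intro h <;> rw [hdd] <;> simp only [hs, h, Sum.elim_inl, Sum.elim_inr]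
  refine ⟨d, τ, ?_, ?_⟩
  · intro i
    have hs : τ (τ.symm i) = i := Equiv.apply_symm_apply τ i
    rcases hσval (τ.symm i) with h | h
    · have := (hdval (τ.symm i)).1 h
      rw [hs] at this
      rcases hε (Sum.inl (τ.symm i)) with he | he <;> rw [this, he] <;> norm_num
    · have := (hdval (τ.symm i)).2 h
      rw [hs] at this
      rcases hε (Sum.inl (τ.symm i)) with he | he <;> rw [this, he] <;> norm_num
  · ext I J
    rcases I with i | i <;> rcases J with j | j
    · show g _ _ = rePart _ i j
      rw [hg, rePart_perm_u]
      rcases key j with ⟨h1, h2, h3⟩ | ⟨h1, h2, h3⟩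
      · have hdj := (hdval j).1 h1
        rcases eq_or_ne i (σ0 j) with hij | hij
        · rw [if_pos (by rw [h1, hij]), if_pos (by rw [hij, hτ]), hij, ← hτ j, hdj]
          simp
        · rw [if_neg (by rw [h1]; exact fun hc => hij (by injection hc)),
            if_neg (by rw [hτ]; exact hij)]
      · have hdj := (hdval j).2 h1
        rw [if_neg (by rw [h1]; exact fun hc => by injection hc)]
        rcases eq_or_ne i (σ0 j) with hij | hij
        · rw [if_pos (by rw [hij, hτ]), hij, ← hτ j, hdj]
          simp
        · rw [if_neg (by rw [hτ]; exact hij)]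
    · show g _ _ = imPart _ i j
      rw [hg, imPart_perm_u]
      rcases key j with ⟨h1, h2, h3⟩ | ⟨h1, h2, h3⟩
      · have hdj := (hdval j).1 h1
        rw [if_neg (by rw [h2]; exact fun hc => by injection hc)]
        rcases eq_or_ne i (σ0 j) with hij | hij
        · rw [if_pos (by rw [hij, hτ]), hij, ← hτ j, hdj]
          simp
        · rw [if_neg (by rw [hτ]; exact hij)]
      · have hdj := (hdval j).2 h1
        rcases eq_or_ne i (σ0 j) with hij | hij
        · rw [if_pos (by rw [h2, hij]), if_pos (by rw [hij, hτ]), hij, ← hτ j, hdj, h3]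
          simp
        · rw [if_neg (by rw [h2]; exact fun hc => hij (by injection hc)),
            if_neg (by rw [hτ]; exact hij)]
    · show g _ _ = -(imPart _) i j
      rw [hg, imPart_perm_u]
      rcases key j with ⟨h1, h2, h3⟩ | ⟨h1, h2, h3⟩
      · have hdj := (hdval j).1 h1
        rw [if_neg (by rw [h1]; exact fun hc => by injection hc)]
        rcases eq_or_ne i (σ0 j) with hij | hij
        · rw [if_pos (by rw [hij, hτ]), hij, ← hτ j, hdj]
          simp
        · rw [if_neg (by rw [hτ]; exact hij)]
          simp
      · have hdj := (hdval j).2 h1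
        rcases eq_or_ne i (σ0 j) with hij | hij
        · rw [if_pos (by rw [h1, hij]), if_pos (by rw [hij, hτ]), hij, ← hτ j, hdj]
          simp
        · rw [if_neg (by rw [h1]; exact fun hc => hij (by injection hc)),
            if_neg (by rw [hτ]; exact hij)]
          simp
    · show g _ _ = rePart _ i j
      rw [hg, rePart_perm_u]
      rcases key j with ⟨h1, h2, h3⟩ | ⟨h1, h2, h3⟩
      · have hdj := (hdval j).1 h1
        rcases eq_or_ne i (σ0 j) with hij | hij
        · rw [if_pos (by rw [h2, hij]), if_pos (by rw [hij, hτ]), hij, ← hτ j, hdj, h3]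
          simp
        · rw [if_neg (by rw [h2]; exact fun hc => hij (by injection hc)),
            if_neg (by rw [hτ]; exact hij)]
      · have hdj := (hdval j).2 h1
        rw [if_neg (by rw [h2]; exact fun hc => by injection hc)]
        rcases eq_or_ne i (σ0 j) with hij | hij
        · rw [if_pos (by rw [hij, hτ]), hij, ← hτ j, hdj]
          simp
        · rw [if_neg (by rw [hτ]; exact hij)]
lemma entry_int {n : ℕ} {d : Fin n → ℂ} (σ : Equiv.Perm (Fin n))
    (hre : ∀ i, ∃ m : ℤ, (d i).re = m) (him : ∀ i, ∃ m : ℤ, (d i).im = m) :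
    ∀ I J, ∃ m : ℤ,
      kmat (Matrix.diagonal d * (Matrix.of fun i j => if i = σ j then (1:ℂ) else 0)) I J = m := by
  intro I J
  rcases I with i | i <;> rcases J with j | j
  · show ∃ m : ℤ, rePart _ i j = _
    rw [rePart_perm_u]
    split_ifs
    · exact hre i
    · exact ⟨0, by simp⟩
  · show ∃ m : ℤ, imPart _ i j = _
    rw [imPart_perm_u]
    split_ifs
    · exact him i
    · exact ⟨0, by simp⟩
  · show ∃ m : ℤ, -(imPart _ i j) = _
    rw [imPart_perm_u]
    split_ifs
    · obtain ⟨m, hm⟩ := him i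
      exact ⟨-m, by rw [hm]; push_cast; ring⟩
    · exact ⟨0, by simp⟩
  · show ∃ m : ℤ, rePart _ i j = _
    rw [rePart_perm_u]
    split_ifs
    · exact hre i
    · exact ⟨0, by simp⟩

lemma int_to_gamma1 {n : ℕ} {g : GMat n} (h : ∀ i j, ∃ m : ℤ, g i j = m) :
    ∀ i j, ∃ k : ℤ, g i j = (1 : GMat n) i j + ((1:ℕ) : ℝ) * k := by
  intro i j
  obtain ⟨m, hm⟩ := h i j
  refine ⟨m - (if i = j then 1 else 0), ?_⟩
  rw [hm, Matrix.one_apply]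
  push_cast
  split_ifs <;> ring

lemma gamma_to_int {n N : ℕ} {g : GMat n}
    (h : ∀ i j, ∃ k : ℤ, g i j = (1 : GMat n) i j + (N : ℝ) * k) :
    ∀ i j, ∃ m : ℤ, g i j = m := by
  intro i j
  obtain ⟨k, hk⟩ := h i j
  refine ⟨(if i = j then 1 else 0) + N * k, ?_⟩
  rw [hk, Matrix.one_apply]
  push_cast
  split_ifs <;> ring
lemma rePart_diag {n : ℕ} (d : Fin n → ℂ) (i j : Fin n) :
    rePart (Matrix.diagonal d) i j = if i = j then (d i).re else 0 := by
  rw [rePart, Matrix.of_apply, Matrix.diagonal_apply]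
  split_ifs <;> simp

lemma imPart_diag {n : ℕ} (d : Fin n → ℂ) (i j : Fin n) :
    imPart (Matrix.diagonal d) i j = if i = j then (d i).im else 0 := by
  rw [imPart, Matrix.of_apply, Matrix.diagonal_apply]
  split_ifs <;> simp

theorem stmt8' (n : ℕ) :
    (GammaN n 1 ∩ Kset n
        = kmat '' {u : Mat n | ∃ (d : Fin n → ℂ) (σ : Equiv.Perm (Fin n)),
            (∀ i, d i = 1 ∨ d i = -1 ∨ d i = Complex.I ∨ d i = -Complex.I) ∧
            u = Matrix.diagonal d * (Matrix.of fun i j => if i = σ j then (1 : ℂ) else 0)})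
    ∧ (GammaN n 2 ∩ Kset n
        = kmat '' {u : Mat n | ∃ d : Fin n → ℂ,
            (∀ i, d i = 1 ∨ d i = -1) ∧ u = Matrix.diagonal d})
    ∧ ∀ N : ℕ, 3 ≤ N → GammaN n N ∩ Kset n = {1} := by
  refine ⟨?_, ?_, ?_⟩
  · -- N = 1
    ext g
    simp only [Set.mem_inter_iff, Set.mem_image, Set.mem_setOf_eq, GammaN, Kset]
    constructor
    · rintro ⟨⟨hsp, hic⟩, -, horth⟩
      obtain ⟨π, ε, hε, hg⟩ := signed_perm (gamma_to_int hic) horth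
      have hrel := sp_rel hg hsp
      obtain ⟨d, σ, hd, hgeq⟩ := recon hε hg hrel
      exact ⟨_, ⟨d, σ, hd, rfl⟩, hgeq.symm⟩
    · rintro ⟨u, ⟨d, σ, hd, rfl⟩, rfl⟩
      have hd1 : ∀ i, (d i).re * (d i).re + (d i).im * (d i).im = 1 := by
        intro i; rcases hd i with h|h|h|h <;> rw [h] <;> norm_num
      obtain ⟨hsp, horth⟩ := perm_u_mem d σ hd1
      have hre : ∀ i, ∃ m : ℤ, (d i).re = m := by
        intro i
        rcases hd i with h|h|h|h <;> rw [h] <;>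
          [exact ⟨1, by norm_num⟩; exact ⟨-1, by norm_num⟩;
           exact ⟨0, by norm_num⟩; exact ⟨0, by norm_num⟩]
      have him : ∀ i, ∃ m : ℤ, (d i).im = m := by
        intro i
        rcases hd i with h|h|h|h <;> rw [h] <;>
          [exact ⟨0, by norm_num⟩; exact ⟨0, by norm_num⟩;
           exact ⟨1, by norm_num⟩; exact ⟨-1, by norm_num⟩]
      exact ⟨⟨hsp, int_to_gamma1 (entry_int σ hre him)⟩, hsp, horth⟩
  · -- N = 2
    ext g
    simp only [Set.mem_inter_iff, Set.mem_image, Set.mem_setOf_eq, GammaN, Kset]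
    constructor
    · rintro ⟨⟨hsp, hic⟩, -, horth⟩
      obtain ⟨π, ε, hε, hg⟩ := signed_perm (gamma_to_int hic) horth
      have hrel := sp_rel hg hsp
      have hπ : ∀ j, π j = j := by
        intro j
        by_contra hne
        obtain ⟨k, hk⟩ := hic j j
        rw [hg, if_neg (fun hc => hne hc.symm), Matrix.one_apply_eq] at hk
        have h3 : (0:ℤ) = 1 + 2*k := by exact_mod_cast hk
        omega
      have hεd : ∀ a : Fin n, ε (Sum.inl a) = ε (Sum.inr a) := by
        intro a
        rcases pairing hε hrel a with ⟨b, h1, h2, h3⟩ | ⟨b, h1, h2, h3⟩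
        · exact h3
        · rw [hπ] at h1; exact absurd h1 (by simp)
      refine ⟨Matrix.diagonal (fun a => ((ε (Sum.inl a) : ℝ) : ℂ)),
        ⟨fun a => ((ε (Sum.inl a) : ℝ) : ℂ), ?_, rfl⟩, ?_⟩
      · intro a
        rcases hε (Sum.inl a) with h|h <;> [left; right] <;> simp [h]
      · ext I J
        rcases I with i | i <;> rcases J with j | j
        · show rePart _ i j = g _ _
          rw [rePart_diag, hg, hπ]
          rcases eq_or_ne i j with h | h
          · subst h; simp
          · rw [if_neg h, if_neg (by simpa using h)]
        · show imPart _ i j = g _ _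
          have hne : (Sum.inl i : Fin n ⊕ Fin n) ≠ Sum.inr j := by simp
          rw [imPart_diag, hg, hπ, if_neg hne]
          split_ifs <;> simp
        · show -(imPart _ i j) = g _ _
          have hne : (Sum.inr i : Fin n ⊕ Fin n) ≠ Sum.inl j := by simp
          rw [imPart_diag, hg, hπ, if_neg hne]
          split_ifs <;> simp
        · show rePart _ i j = g _ _
          rw [rePart_diag, hg, hπ]
          rcases eq_or_ne i j with h | h
          · subst h; simp [hεd i]
          · rw [if_neg h, if_neg (by simpa using h)]
    · rintro ⟨u, ⟨d, hd, rfl⟩, rfl⟩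
      have hP : (Matrix.of fun i j => if i = (Equiv.refl (Fin n)) j then (1:ℂ) else 0)
          = (1 : Mat n) := by
        ext i j; simp [Matrix.one_apply]; congr
      have hu : Matrix.diagonal d
          = Matrix.diagonal d * (Matrix.of fun i j => if i = (Equiv.refl (Fin n)) j then (1:ℂ) else 0) := by
        rw [hP, mul_one]
      have hd1 : ∀ i, (d i).re * (d i).re + (d i).im * (d i).im = 1 := by
        intro i; rcases hd i with h|h <;> rw [h] <;> norm_num
      have hmem := perm_u_mem d (Equiv.refl (Fin n)) hd1
      rw [← hu] at hmem
      obtain ⟨hsp, horth⟩ := hmem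
      refine ⟨⟨hsp, ?_⟩, hsp, horth⟩
      intro I J
      have hent : ∀ i : Fin n, ∃ e : ℤ, ((d i).re = e ∧ (d i).im = 0) ∧ (e = 1 ∨ e = -1) := by
        intro i
        rcases hd i with h|h
        · exact ⟨1, ⟨by rw [h]; norm_num, by rw [h]; norm_num⟩, Or.inl rfl⟩
        · exact ⟨-1, ⟨by rw [h]; norm_num, by rw [h]; norm_num⟩, Or.inr rfl⟩
      rcases I with i | i <;> rcases J with j | j
      · show ∃ k : ℤ, rePart _ i j = (1 : GMat n) _ _ + _
        rw [rePart_diag]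
        obtain ⟨e, ⟨hre, -⟩, he⟩ := hent i
        rcases eq_or_ne i j with h | h
        · subst h
          rcases he with rfl | rfl
          · exact ⟨0, by rw [if_pos rfl, hre, Matrix.one_apply_eq]; push_cast; ring⟩
          · exact ⟨-1, by rw [if_pos rfl, hre, Matrix.one_apply_eq]; push_cast; ring⟩
        · exact ⟨0, by rw [if_neg h, Matrix.one_apply_ne (by simpa using h)]; push_cast; ring⟩
      · show ∃ k : ℤ, imPart _ i j = (1 : GMat n) _ _ + _
        rw [imPart_diag]
        obtain ⟨e, ⟨-, him⟩, -⟩ := hent i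
        refine ⟨0, ?_⟩
        rw [Matrix.one_apply_ne (by simp)]
        split_ifs with h
        · rw [him]; push_cast; ring
        · push_cast; ring
      · show ∃ k : ℤ, -(imPart _ i j) = (1 : GMat n) _ _ + _
        rw [imPart_diag]
        obtain ⟨e, ⟨-, him⟩, -⟩ := hent i
        refine ⟨0, ?_⟩
        rw [Matrix.one_apply_ne (by simp)]
        split_ifs with h
        · rw [him]; push_cast; ring
        · push_cast; ring
      · show ∃ k : ℤ, rePart _ i j = (1 : GMat n) _ _ + _
        rw [rePart_diag]
        obtain ⟨e, ⟨hre, -⟩, he⟩ := hent i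
        rcases eq_or_ne i j with h | h
        · subst h
          rcases he with rfl | rfl
          · exact ⟨0, by rw [if_pos rfl, hre, Matrix.one_apply_eq]; push_cast; ring⟩
          · exact ⟨-1, by rw [if_pos rfl, hre, Matrix.one_apply_eq]; push_cast; ring⟩
        · exact ⟨0, by rw [if_neg h, Matrix.one_apply_ne (by simpa using h)]; push_cast; ring⟩
  · -- N ≥ 3
    intro N hN
    ext g
    simp only [Set.mem_inter_iff, Set.mem_singleton_iff, GammaN, Kset, Set.mem_setOf_eq]
    constructor
    · rintro ⟨⟨hsp, hic⟩, -, horth⟩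
      obtain ⟨π, ε, hε, hg⟩ := signed_perm (gamma_to_int hic) horth
      have hN3 : (3:ℤ) ≤ (N:ℤ) := by exact_mod_cast hN
      have hπ : ∀ j, π j = j := by
        intro j
        by_contra hne
        obtain ⟨k, hk⟩ := hic j j
        rw [hg, if_neg (fun hc => hne hc.symm), Matrix.one_apply_eq] at hk
        have h3 : (0:ℤ) = 1 + N*k := by exact_mod_cast hk
        have hdvd : (N:ℤ) ∣ 1 := ⟨-k, by linarith⟩
        have := Int.le_of_dvd one_pos hdvd
        omega
      have hεj : ∀ j, ε j = 1 := by
        intro j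
        rcases hε j with h | h
        · exact h
        · exfalso
          obtain ⟨k, hk⟩ := hic j j
          rw [hg, if_pos (hπ j).symm, h, Matrix.one_apply_eq] at hk
          have h3 : (-1:ℤ) = 1 + N*k := by exact_mod_cast hk
          have hdvd : (N:ℤ) ∣ 2 := ⟨-k, by linarith⟩
          have := Int.le_of_dvd two_pos hdvd
          omega
      ext i j
      rw [hg, hπ j, Matrix.one_apply]
      split_ifs with h
      · exact hεj j
      · rfl
    · rintro rfl
      refine ⟨⟨?_, ?_⟩, ?_, ?_⟩
      · show (1:GMat n)ᵀ * Jmat n * 1 = Jmat n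
        simp
      · intro i j
        exact ⟨0, by push_cast; ring⟩
      · show (1:GMat n)ᵀ * Jmat n * 1 = Jmat n
        simp
      · simp

theorem stmt8 (n : ℕ) :
    (GammaN n 1 ∩ Kset n
        = kmat '' {u : Mat n | ∃ (d : Fin n → ℂ) (σ : Equiv.Perm (Fin n)),
            (∀ i, d i = 1 ∨ d i = -1 ∨ d i = Complex.I ∨ d i = -Complex.I) ∧
            u = Matrix.diagonal d * (Matrix.of fun i j => if i = σ j then (1 : ℂ) else 0)})
    ∧ (GammaN n 2 ∩ Kset n
        = kmat '' {u : Mat n | ∃ d : Fin n → ℂ,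
            (∀ i, d i = 1 ∨ d i = -1) ∧ u = Matrix.diagonal d})
    ∧ ∀ N : ℕ, 3 ≤ N → GammaN n N ∩ Kset n = {1} := by
  exact stmt8' n
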